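/- arXiv:2112.01728 — 8 statements merged into one kernel-verified Lean document; each statement's English description precedes it below -/
import Mathlib

section
/- Let X be a normed space, C a nonempty closed convex subset of X, and r > d(0,C). Define the truncated set C^r := C ∩ B(0,r), the intersection of C with the closed ball of radius r centered at the origin. Then for every x with ‖x‖ ≤ r, one has d(x, C^r) ≤ (2r/(r − d(0,C))) · d(x, C). -/
open Metric Set Filter Topology

theorem truncation_estimate {X : Type*} [NormedAddCommGroup X] [NormedSpace ℝ X]
    (C : Set X) (hne : C.Nonempty) (hcl : IsClosed C) (hcv : Convex ℝ C)
    (r : ℝ) (hr : infDist 0 C < r)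
    (x : X) (hx : ‖x‖ ≤ r) :
    infDist x (C ∩ closedBall 0 r) ≤ (2 * r / (r - infDist 0 C)) * infDist x C := by
  set δ := infDist 0 C with hδdef
  set d := infDist x C with hddef
  have hδ0 : 0 ≤ δ := infDist_nonneg
  have hd0 : 0 ≤ d := infDist_nonneg
  have hr0 : 0 < r := lt_of_le_of_lt hδ0 hr
  have hrδ : 0 < r - δ := by linarith
  refine le_of_forall_pos_le_add fun ε hε => ?_
  -- choose a small η > 0
  have hcont : ContinuousAt (fun η : ℝ => (d + η) * (2 * r / (r - δ - η))) 0 := by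
    apply ContinuousAt.mul
    · exact (continuous_const.add continuous_id).continuousAt
    · exact ContinuousAt.div continuousAt_const
        ((continuous_const.sub continuous_id).continuousAt) (by simpa using hrδ.ne')
  have hf0 : (d + 0) * (2 * r / (r - δ - 0)) < 2 * r / (r - δ) * d + ε := by
    simp only [add_zero, sub_zero]
    rw [mul_comm]
    linarith
  have hev1 : ∀ᶠ η in 𝓝[>] (0:ℝ),
      (d + η) * (2 * r / (r - δ - η)) < 2 * r / (r - δ) * d + ε :=
    ((hcont.tendsto.eventually_lt_const hf0)).filter_mono nhdsWithin_le_nhds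
  have hev2 : ∀ᶠ η in 𝓝[>] (0:ℝ), η < min ε (r - δ) :=
    (gt_mem_nhds (lt_min hε hrδ)).filter_mono nhdsWithin_le_nhds
  have hev3 : ∀ᶠ η in 𝓝[>] (0:ℝ), (0:ℝ) < η := self_mem_nhdsWithin
  obtain ⟨η, hfη, hηmin, hη0⟩ := (hev1.and (hev2.and hev3)).exists
  have hηε : η < ε := lt_of_lt_of_le hηmin (min_le_left _ _)
  have hηrδ : η < r - δ := lt_of_lt_of_le hηmin (min_le_right _ _)
  -- pick near-optimal points
  obtain ⟨c₀, hc₀C, hc₀d⟩ := (infDist_lt_iff hne).mp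
    (show infDist 0 C < δ + η by linarith)
  have hs : ‖c₀‖ < δ + η := by rwa [dist_zero_left] at hc₀d
  obtain ⟨c, hcC, hcd⟩ := (infDist_lt_iff hne).mp
    (show infDist x C < d + η by linarith)
  have hxc : ‖x - c‖ < d + η := by rwa [dist_eq_norm] at hcd
  by_cases hcr : ‖c‖ ≤ r
  · have hmem : c ∈ C ∩ closedBall 0 r :=
      ⟨hcC, by simpa [mem_closedBall, dist_zero_right] using hcr⟩
    have hK : 1 ≤ 2 * r / (r - δ) := by
      rw [le_div_iff₀ hrδ]; linarith
    refine le_trans (infDist_le_dist_of_mem hmem) ?_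
    nlinarith
  · push_neg at hcr
    set s := ‖c₀‖ with hsdef
    have hs0 : 0 ≤ s := norm_nonneg _
    have hsr : s < r := by linarith
    have hcs : 0 < ‖c‖ - s := by linarith
    have hrs : 0 < r - s := by linarith
    set t := (‖c‖ - r) / (‖c‖ - s) with htdef
    have ht0 : 0 ≤ t := div_nonneg (by linarith) (by linarith)
    have ht1 : t ≤ 1 := by rw [div_le_one hcs]; linarith
    set z := t • c₀ + (1 - t) • c with hzdef
    have hzC : z ∈ C := hcv hc₀C hcC ht0 (by linarith) (by ring)
    have hznorm : ‖z‖ ≤ r := by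
      calc ‖z‖ ≤ t * s + (1 - t) * ‖c‖ := by
            refine (norm_add_le _ _).trans ?_
            rw [norm_smul, norm_smul, Real.norm_of_nonneg ht0,
              Real.norm_of_nonneg (by linarith)]
        _ = ‖c‖ - (‖c‖ - r) / (‖c‖ - s) * (‖c‖ - s) := by rw [htdef]; ring
        _ = r := by rw [div_mul_cancel₀ _ hcs.ne']; ring
    have hmem : z ∈ C ∩ closedBall 0 r :=
      ⟨hzC, by simpa [mem_closedBall, dist_zero_right] using hznorm⟩
    have hxz : ‖x - z‖ ≤ ‖x - c‖ + t * ‖c - c₀‖ := by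
      have hrew : x - z = (x - c) + t • (c - c₀) := by rw [hzdef]; module
      rw [hrew]
      refine (norm_add_le _ _).trans ?_
      rw [norm_smul, Real.norm_of_nonneg ht0]
    have hcx : ‖c‖ - r ≤ ‖x - c‖ := by
      have h1 : ‖c‖ - ‖x‖ ≤ ‖c - x‖ := norm_sub_norm_le c x
      rw [norm_sub_rev] at h1
      linarith
    have hcc0 : ‖c - c₀‖ ≤ ‖c‖ + s := norm_sub_le _ _
    have key : ‖x - c‖ + t * ‖c - c₀‖ ≤ ‖x - c‖ * (2 * r / (r - s)) := by
      have h1 : t * ‖c - c₀‖ ≤ (‖c‖ - r) * (‖c‖ + s) / (‖c‖ - s) := by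
        rw [htdef, div_mul_eq_mul_div]
        gcongr
      have h2 : (‖c‖ - r) * (‖c‖ + s) / (‖c‖ - s) ≤ ‖x - c‖ * (r + s) / (r - s) := by
        rw [div_le_div_iff₀ hcs hrs]
        nlinarith [mul_nonneg (mul_nonneg (sub_nonneg.mpr hcr.le) hs0) (sub_nonneg.mpr hcr.le),
          mul_nonneg (sub_nonneg.mpr hcx) (mul_nonneg (by linarith : (0:ℝ) ≤ r + s) hcs.le)]
      have h3 : ‖x - c‖ + ‖x - c‖ * (r + s) / (r - s) = ‖x - c‖ * (2 * r / (r - s)) := by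
        field_simp
        ring
      linarith
    have hmono : 2 * r / (r - s) ≤ 2 * r / (r - δ - η) := by
      apply div_le_div_of_nonneg_left (by linarith) (by linarith) (by linarith)
    calc infDist x (C ∩ closedBall 0 r) ≤ dist x z := infDist_le_dist_of_mem hmem
      _ = ‖x - z‖ := dist_eq_norm _ _
      _ ≤ ‖x - c‖ + t * ‖c - c₀‖ := hxz
      _ ≤ ‖x - c‖ * (2 * r / (r - s)) := key
      _ ≤ (d + η) * (2 * r / (r - δ - η)) := by
          apply mul_le_mul hxc.le hmono (by positivity) (by linarith)
      _ ≤ 2 * r / (r - δ) * d + ε := hfη.le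
end

section
/- Let X be a normed space, C a nonempty closed convex subset of X, and r > 3·d(0,C). Then for every x with ‖x‖ ≤ r one has d(x, C ∩ B(0,r)) ≤ 3·d(x, C). -/
open Metric Set

theorem truncation_estimate_three {X : Type*} [NormedAddCommGroup X] [NormedSpace ℝ X]
    (C : Set X) (hne : C.Nonempty) (hcl : IsClosed C) (hcv : Convex ℝ C)
    (r : ℝ) (hr : 3 * infDist 0 C < r)
    (x : X) (hx : ‖x‖ ≤ r) :
    infDist x (C ∩ closedBall 0 r) ≤ 3 * infDist x C := by
  have hd0 : (0:ℝ) ≤ infDist 0 C := infDist_nonneg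
  have hdx : (0:ℝ) ≤ infDist x C := infDist_nonneg
  refine le_of_forall_pos_le_add fun ε hε => ?_
  set δ := min (ε/3) ((r - 3 * infDist 0 C)/3) with hδdef
  have hδpos : 0 < δ := lt_min (by linarith) (by linarith)
  have hδε : δ ≤ ε/3 := min_le_left _ _
  have hδr : δ ≤ (r - 3 * infDist 0 C)/3 := min_le_right _ _
  obtain ⟨y, hyC, hy⟩ := (infDist_lt_iff hne).mp
    (show infDist x C < infDist x C + δ by linarith)
  obtain ⟨y₀, hy₀C, hy₀⟩ := (infDist_lt_iff hne).mp
    (show infDist 0 C < infDist 0 C + δ by linarith)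
  have hy₀n : ‖y₀‖ < infDist 0 C + δ := by rwa [dist_zero_left] at hy₀
  have h3y₀ : 3 * ‖y₀‖ < r := by linarith
  have hy₀0 : (0:ℝ) ≤ ‖y₀‖ := norm_nonneg _
  by_cases hyr : ‖y‖ ≤ r
  · have hmem : y ∈ C ∩ closedBall 0 r := ⟨hyC, by rwa [mem_closedBall_zero_iff]⟩
    calc infDist x (C ∩ closedBall 0 r) ≤ dist x y := infDist_le_dist_of_mem hmem
      _ ≤ 3 * infDist x C + ε := by linarith
  · push_neg at hyr
    set a := ‖y‖
    set b := ‖y₀‖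
    have hab : 0 < a - b := by simp only [a, b]; linarith
    set t := (a - r)/(a - b) with ht
    have ht0 : 0 ≤ t := div_nonneg (by linarith) hab.le
    have ht1 : t ≤ 1 := by
      rw [div_le_one hab]; linarith
    set z := t • y₀ + (1 - t) • y with hz
    have hzC : z ∈ C := hcv hy₀C hyC ht0 (by linarith) (by ring)
    have hzb : ‖z‖ ≤ r := by
      have h1 : ‖z‖ ≤ t * b + (1 - t) * a := by
        calc ‖z‖ ≤ ‖t • y₀‖ + ‖(1-t) • y‖ := norm_add_le _ _
          _ = t * b + (1 - t) * a := by
            rw [norm_smul, norm_smul, Real.norm_eq_abs, Real.norm_eq_abs,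
              abs_of_nonneg ht0, abs_of_nonneg (by linarith : (0:ℝ) ≤ 1 - t)]
      have h2 : t * (a - b) = a - r := div_mul_cancel₀ _ hab.ne'
      nlinarith
    have hzmem : z ∈ C ∩ closedBall 0 r := ⟨hzC, by rwa [mem_closedBall_zero_iff]⟩
    have hyz : dist y z = t * ‖y₀ - y‖ := by
      have : y - z = t • (y - y₀) := by
        rw [hz]; module
      rw [dist_eq_norm, this, norm_smul, Real.norm_eq_abs, abs_of_nonneg ht0,
        norm_sub_rev]
    have har : a - r ≤ dist x y := by
      have : a ≤ dist x y + ‖x‖ := by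
        calc a = ‖y - x + x‖ := by simp [a]
          _ ≤ ‖y - x‖ + ‖x‖ := norm_add_le _ _
          _ = dist x y + ‖x‖ := by rw [← dist_eq_norm, dist_comm]
      linarith
    have hkey : t * ‖y₀ - y‖ ≤ 2 * (a - r) := by
      have hub : ‖y₀ - y‖ ≤ b + a := norm_sub_le _ _
      have h2 : t * (a - b) = a - r := div_mul_cancel₀ _ hab.ne'
      have h3 : 3 * b ≤ a := by simp only [a, b]; linarith
      nlinarith [mul_le_mul_of_nonneg_left hub ht0]
    calc infDist x (C ∩ closedBall 0 r) ≤ dist x z := infDist_le_dist_of_mem hzmem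
      _ ≤ dist x y + dist y z := dist_triangle _ _ _
      _ ≤ dist x y + 2 * (a - r) := by rw [hyz]; linarith
      _ ≤ 3 * infDist x C + ε := by linarith
end

section
/- Let H be a real Hilbert space, T > 0, m ∈ ℕ, and let u : [0,T] → H^m and b : [0,T] → ℝ^m be continuous. Define C(t) := {x ∈ H : ⟨u_i(t), x⟩ ≤ b_i(t) for all i = 1,…,m}. Then the following are equivalent: (i) for every t ∈ [0,T] there exists x ∈ H with ⟨u_i(t), x⟩ < b_i(t) for all i; (ii) there exists ε > 0 such that for every t ∈ [0,T] there exists x ∈ H with ⟨u_i(t), x⟩ ≤ b_i(t) − ε for all i. -/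
open Set
open scoped RealInnerProductSpace

theorem uniform_slater_equiv_strong {H : Type*} [NormedAddCommGroup H]
    [InnerProductSpace ℝ H] [CompleteSpace H]
    (T : ℝ) (hT : 0 < T) (m : ℕ)
    (u : Fin m → ℝ → H) (b : Fin m → ℝ → ℝ)
    (hu : ∀ i, ContinuousOn (u i) (Icc 0 T))
    (hb : ∀ i, ContinuousOn (b i) (Icc 0 T)) :
    (∀ t ∈ Icc (0:ℝ) T, ∃ x : H, ∀ i, ⟪u i t, x⟫ < b i t) ↔
    (∃ ε > (0:ℝ), ∀ t ∈ Icc (0:ℝ) T, ∃ x : H, ∀ i, ⟪u i t, x⟫ ≤ b i t - ε) := by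
  constructor
  · intro h
    have key : ∀ t ∈ Icc (0:ℝ) T, ∃ ε > (0:ℝ), ∃ V : Set ℝ, IsOpen V ∧ t ∈ V ∧
        ∀ s ∈ V ∩ Icc (0:ℝ) T, ∃ x : H, ∀ i, ⟪u i s, x⟫ ≤ b i s - ε := by
      intro t ht
      obtain ⟨x, hx⟩ := h t ht
      rcases isEmpty_or_nonempty (Fin m) with hm | hm
      · exact ⟨1, one_pos, univ, isOpen_univ, mem_univ t,
          fun s _ => ⟨0, fun i => (IsEmpty.false i).elim⟩⟩
      · set g : Fin m → ℝ → ℝ := fun i s => b i s - ⟪u i s, x⟫ with hg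
        have hgc : ∀ i, ContinuousOn (g i) (Icc 0 T) := fun i =>
          (hb i).sub ((hu i).inner continuousOn_const)
        set ε : ℝ := (Finset.univ.inf' Finset.univ_nonempty fun i => g i t) / 2 with hε
        have hεpos : 0 < ε := by
          apply half_pos
          rw [Finset.lt_inf'_iff]
          intro i _
          simpa [hg, sub_pos] using hx i
        have hev : ∀ᶠ s in nhdsWithin t (Icc (0:ℝ) T), ∀ i, ⟪u i s, x⟫ ≤ b i s - ε := by
          rw [Filter.eventually_all]
          intro i
          have h1 : ε < g i t := by
            have h2 : Finset.univ.inf' Finset.univ_nonempty (fun i => g i t) ≤ g i t :=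
              Finset.inf'_le _ (Finset.mem_univ i)
            have h3 : 0 < Finset.univ.inf' Finset.univ_nonempty (fun i => g i t) := by
              rw [Finset.lt_inf'_iff]
              intro i _
              simpa [hg, sub_pos] using hx i
            calc ε < Finset.univ.inf' Finset.univ_nonempty (fun i => g i t) := by
                    simpa [hε] using half_lt_self h3
              _ ≤ g i t := h2
          have := (hgc i t ht).eventually (eventually_gt_nhds h1)
          filter_upwards [this] with s hs
          have : ε < b i s - ⟪u i s, x⟫ := hs
          linarith
        rw [eventually_nhdsWithin_iff] at hev
        obtain ⟨V, hVsub, hVopen, htV⟩ := eventually_nhds_iff.mp hev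
        exact ⟨ε, hεpos, V, hVopen, htV, fun s hs => ⟨x, hVsub s hs.1 hs.2⟩⟩
    choose! ε hεpos V hVopen htV hgood using key
    obtain ⟨ts, hts, hcover⟩ := isCompact_Icc.elim_nhds_subcover V
      (fun t ht => (hVopen t ht).mem_nhds (htV t ht))
    have h0 : (0:ℝ) ∈ Icc (0:ℝ) T := ⟨le_refl 0, hT.le⟩
    have hne : ts.Nonempty := by
      obtain ⟨t, htts, -⟩ := mem_iUnion₂.mp (hcover h0)
      exact ⟨t, htts⟩
    refine ⟨ts.inf' hne ε, ?_, ?_⟩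
    · rw [gt_iff_lt, Finset.lt_inf'_iff]
      exact fun t htts => hεpos t (hts t htts)
    · intro s hs
      obtain ⟨t, htts, hsV⟩ := mem_iUnion₂.mp (hcover hs)
      obtain ⟨x, hxs⟩ := hgood t (hts t htts) s ⟨hsV, hs⟩
      refine ⟨x, fun i => le_trans (hxs i) ?_⟩
      have : ts.inf' hne ε ≤ ε t := Finset.inf'_le _ htts
      linarith
  · rintro ⟨ε, hε, h⟩ t ht
    obtain ⟨x, hx⟩ := h t ht
    exact ⟨x, fun i => lt_of_le_of_lt (hx i) (by linarith)⟩
end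

section
/- Let H be a real Hilbert space, m ∈ ℕ, and fix u_1,…,u_m ∈ H, b_1,…,b_m ∈ ℝ. Define C := {x ∈ H : ⟨u_i, x⟩ ≤ b_i for all i} and f(x) := max_{i=1,…,m} (⟨u_i, x⟩ − b_i). Suppose x̂ ∈ H satisfies f(x̂) < 0 and x ∈ H satisfies f(x) > 0. Then d(x, C) ≤ (f(x)/(f(x) − f(x̂))) · ‖x − x̂‖. -/
open Set
open scoped RealInnerProductSpace

theorem distance_estimate_via_slater {H : Type*} [NormedAddCommGroup H]
    [InnerProductSpace ℝ H] [CompleteSpace H]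
    (m : ℕ) (hm : 0 < m) (u : Fin m → H) (b : Fin m → ℝ)
    (f : H → ℝ) (hf : ∀ y, f y = ⨆ i, (⟪u i, y⟫ - b i))
    (C : Set H) (hC : C = {y : H | ∀ i, ⟪u i, y⟫ ≤ b i})
    (xh x : H) (hxh : f xh < 0) (hx : 0 < f x) :
    Metric.infDist x C ≤ (f x / (f x - f xh)) * ‖x - xh‖ := by
  haveI : Nonempty (Fin m) := Fin.pos_iff_nonempty.mp hm
  have hD : 0 < f x - f xh := by linarith
  set t : ℝ := f x / (f x - f xh) with ht
  have ht0 : 0 ≤ t := div_nonneg hx.le hD.le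
  have ht1 : t ≤ 1 := by rw [ht, div_le_one hD]; linarith
  have key : t * (f x - f xh) = f x := div_mul_cancel₀ _ hD.ne'
  set z : H := x + t • (xh - x) with hz
  have hle : ∀ (y : H) (i : Fin m), ⟪u i, y⟫ - b i ≤ f y := by
    intro y i
    rw [hf]
    exact le_ciSup (f := fun j => ⟪u j, y⟫ - b j) (Set.Finite.bddAbove (Set.finite_range _)) i
  have hzC : z ∈ C := by
    rw [hC]
    intro i
    have h1 := hle x i
    have h2 := hle xh i
    have hiz : ⟪u i, z⟫ = ⟪u i, x⟫ + t * (⟪u i, xh⟫ - ⟪u i, x⟫) := by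
      simp [hz, inner_add_right, inner_smul_right, inner_sub_right]
    rw [hiz]
    nlinarith [mul_le_mul_of_nonneg_left h2 ht0,
      mul_le_mul_of_nonneg_left h1 (by linarith : (0:ℝ) ≤ 1 - t)]
  have hxz : x - z = t • (x - xh) := by rw [hz]; module
  calc Metric.infDist x C ≤ dist x z := Metric.infDist_le_dist_of_mem hzC
    _ = t * ‖x - xh‖ := by
        rw [dist_eq_norm, hxz, norm_smul, Real.norm_eq_abs, abs_of_nonneg ht0]
end

section
/- Let H be a real Hilbert space, m ∈ ℕ, γ > 0, and let u, u' ∈ H^m, b, b' ∈ ℝ^m define polyhedra C := {x : ⟨u_i, x⟩ ≤ b_i ∀i} and C' := {x : ⟨u'_i, x⟩ ≤ b'_i ∀i}. Suppose x̂ ∈ H satisfies ⟨u'_i, x̂⟩ ≤ b'_i − γ for all i. Then for every x ∈ C, d(x, C') ≤ ‖x − x̂‖ · min{1, γ^{-1} · max_{i=1,…,m} [⟨u'_i − u_i, x⟩ + b_i − b'_i]_+ }, where [s]_+ := max{s, 0}. -/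
open Set
open scoped RealInnerProductSpace

theorem distance_estimate_perturbed_polyhedra {H : Type*} [NormedAddCommGroup H]
    [InnerProductSpace ℝ H] [CompleteSpace H]
    (m : ℕ) (hm : 0 < m) (γ : ℝ) (hγ : 0 < γ)
    (u u' : Fin m → H) (b b' : Fin m → ℝ)
    (C C' : Set H)
    (hC : C = {x : H | ∀ i, ⟪u i, x⟫ ≤ b i})
    (hC' : C' = {x : H | ∀ i, ⟪u' i, x⟫ ≤ b' i})
    (xh : H) (hxh : ∀ i, ⟪u' i, xh⟫ ≤ b' i - γ)
    (x : H) (hx : x ∈ C) :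
    Metric.infDist x C' ≤
      ‖x - xh‖ * min 1 (γ⁻¹ * ⨆ i, max (⟪u' i - u i, x⟫ + b i - b' i) 0) := by
  haveI : Nonempty (Fin m) := ⟨⟨0, hm⟩⟩
  set M : ℝ := ⨆ i, max (⟪u' i - u i, x⟫ + b i - b' i) 0 with hM
  have hbdd : BddAbove (Set.range fun i => max (⟪u' i - u i, x⟫ + b i - b' i) 0) :=
    (Set.finite_range _).bddAbove
  have hM0 : 0 ≤ M := le_trans (le_max_right _ 0) (le_ciSup hbdd (Classical.arbitrary (Fin m)))
  have hMle : ∀ i, ⟪u' i - u i, x⟫ + b i - b' i ≤ M := fun i =>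
    le_trans (le_max_left _ 0) (le_ciSup hbdd i)
  set t : ℝ := min 1 (γ⁻¹ * M) with ht
  have ht0 : 0 ≤ t := le_min zero_le_one (by positivity)
  have ht1 : t ≤ 1 := min_le_left _ _
  set y : H := x + t • (xh - x) with hy
  have hyC' : y ∈ C' := by
    rw [hC']
    intro i
    have hs : ⟪u' i, x⟫ - b' i ≤ M := by
      have h1 : ⟪u' i, x⟫ = ⟪u' i - u i, x⟫ + ⟪u i, x⟫ := by
        rw [inner_sub_left]; ring
      have h2 : ⟪u i, x⟫ ≤ b i := by rw [hC] at hx; exact hx i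
      have := hMle i
      linarith
    have key : (1 - t) * (⟪u' i, x⟫ - b' i) ≤ t * γ := by
      rcases le_total 1 (γ⁻¹ * M) with h | h
      · have : t = 1 := min_eq_left h
        rw [this]; simp; linarith
      · have htM : t = γ⁻¹ * M := min_eq_right h
        have htγ : t * γ = M := by
          rw [htM]; field_simp
        rw [htγ]
        rcases le_total (⟪u' i, x⟫ - b' i) 0 with h2 | h2
        · nlinarith
        · nlinarith
    have hinner : ⟪u' i, y⟫ = ⟪u' i, x⟫ + t * (⟪u' i, xh⟫ - ⟪u' i, x⟫) := by
      rw [hy, inner_add_right, real_inner_smul_right, inner_sub_right]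
    have hxh' := hxh i
    rw [hinner]
    nlinarith
  calc Metric.infDist x C' ≤ dist x y := Metric.infDist_le_dist_of_mem hyC'
    _ = ‖x - xh‖ * t := by
        rw [dist_eq_norm, hy]
        have : x - (x + t • (xh - x)) = t • (x - xh) := by
          rw [smul_sub, smul_sub]; abel
        rw [this, norm_smul, Real.norm_eq_abs, abs_of_nonneg ht0, mul_comm]
end

section
/- Consider H = ℝ², m = 2, and for t ∈ [0,1] the moving polyhedron C(t) := {x ∈ ℝ² : x₂ ≤ 1, t·x₁ − x₂ ≤ 0}. For t ∈ (0,1], let x(t) := (t^{-3}, 1). Then d(x(t), C(t)) = t^{-3} − t^{-1} and max_{i=1,2} [⟨u_i(t), x(t)⟩ − b_i(t)]_+ = t^{-2} − 1, where u_1(t) = (0,1), b_1(t) = 1, u_2(t) = (t,−1), b_2(t) = 0. Consequently, any constant L̃(t) satisfying the Hoffman error bound d(y, C(t)) ≤ L̃(t) · max_i [⟨u_i(t), y⟩ − b_i(t)]_+ for all y ∈ ℝ² must satisfy L̃(t) ≥ t^{-1} for all t ∈ (0,1]. -/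
open Set

noncomputable def vec2 (a b : ℝ) : EuclideanSpace ℝ (Fin 2) :=
  (WithLp.equiv 2 (Fin 2 → ℝ)).symm ![a, b]

lemma vec2_zero (a b : ℝ) : vec2 a b 0 = a := rfl
lemma vec2_one (a b : ℝ) : vec2 a b 1 = b := rfl

lemma coord_le_dist (x y : EuclideanSpace ℝ (Fin 2)) (i : Fin 2) :
    |x i - y i| ≤ dist x y := by
  rw [EuclideanSpace.dist_eq]
  calc |x i - y i| = Real.sqrt (dist (x i) (y i) ^ 2) := by
        rw [Real.sqrt_sq_eq_abs, Real.dist_eq, abs_abs]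
    _ ≤ _ := by
        apply Real.sqrt_le_sqrt
        exact Finset.single_le_sum (f := fun j => dist (x j) (y j) ^ 2)
          (fun j _ => sq_nonneg _) (Finset.mem_univ i)

lemma infDist_calc (t a : ℝ) (ht : 0 < t) (ha : t⁻¹ ≤ a) :
    Metric.infDist (vec2 a 1)
      {x : EuclideanSpace ℝ (Fin 2) | x 1 ≤ 1 ∧ t * x 0 - x 1 ≤ 0} = a - t⁻¹ := by
  have hmem : vec2 t⁻¹ 1 ∈ {x : EuclideanSpace ℝ (Fin 2) | x 1 ≤ 1 ∧ t * x 0 - x 1 ≤ 0} := by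
    constructor
    · rw [vec2_one]
    · rw [vec2_zero, vec2_one, mul_inv_cancel₀ ht.ne']; norm_num
  have hlb : ∀ y ∈ {x : EuclideanSpace ℝ (Fin 2) | x 1 ≤ 1 ∧ t * x 0 - x 1 ≤ 0},
      a - t⁻¹ ≤ dist (vec2 a 1) y := by
    intro y hy
    obtain ⟨h1, h2⟩ := hy
    have hy0 : y 0 ≤ t⁻¹ := by
      rw [← one_div, le_div_iff₀ ht]; nlinarith
    calc a - t⁻¹ ≤ |vec2 a 1 0 - y 0| := by
          rw [vec2_zero]
          calc a - t⁻¹ ≤ a - y 0 := by linarith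
            _ ≤ |a - y 0| := le_abs_self _
      _ ≤ dist (vec2 a 1) y := coord_le_dist _ _ 0
  apply le_antisymm
  · calc Metric.infDist (vec2 a 1) _ ≤ dist (vec2 a 1) (vec2 t⁻¹ 1) :=
          Metric.infDist_le_dist_of_mem hmem
      _ = a - t⁻¹ := by
          rw [EuclideanSpace.dist_eq]
          have h : ∀ i : Fin 2, dist (vec2 a 1 i) (vec2 t⁻¹ 1 i) ^ 2
              = if i = 0 then (a - t⁻¹)^2 else 0 := by
            intro i
            fin_cases i <;> simp [vec2_zero, vec2_one, Real.dist_eq, sq_abs]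
          rw [Fin.sum_univ_two, h 0, h 1]
          simp [Real.sqrt_sq (by linarith : (0:ℝ) ≤ a - t⁻¹)]
  · refine le_of_not_gt fun h => ?_
    obtain ⟨y, hy, hd⟩ := (Metric.infDist_lt_iff ⟨_, hmem⟩).1 h
    exact absurd hd (not_lt.2 (hlb y hy))

theorem hoffman_constant_unbounded (t : ℝ) (ht : t ∈ Set.Ioc (0:ℝ) 1)
    (C : ℝ → Set (EuclideanSpace ℝ (Fin 2)))
    (hC : ∀ s, C s = {x : EuclideanSpace ℝ (Fin 2) | x 1 ≤ 1 ∧ s * x 0 - x 1 ≤ 0}) :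
    Metric.infDist (vec2 (t ^ 3)⁻¹ 1) (C t) = (t ^ 3)⁻¹ - t⁻¹ ∧
    max (max ((vec2 (t ^ 3)⁻¹ 1) 1 - 1) 0)
        (max (t * (vec2 (t ^ 3)⁻¹ 1) 0 - (vec2 (t ^ 3)⁻¹ 1) 1) 0) = (t ^ 2)⁻¹ - 1 ∧
    ∀ L : ℝ,
      (∀ y : EuclideanSpace ℝ (Fin 2),
        Metric.infDist y (C t) ≤ L * max (max (y 1 - 1) 0) (max (t * y 0 - y 1) 0)) →
      t⁻¹ ≤ L := by
  obtain ⟨ht0, ht1⟩ := ht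
  have htinv : 1 ≤ t⁻¹ := by
    rw [← one_div, le_div_iff₀ ht0]; linarith
  have h3 : t⁻¹ ≤ (t ^ 3)⁻¹ := by
    have ht2 : t ^ 2 ≤ 1 := by nlinarith
    apply inv_anti₀ (by positivity)
    nlinarith [mul_le_mul_of_nonneg_left ht2 ht0.le]
  have h2 : (1:ℝ) ≤ (t ^ 2)⁻¹ := by
    rw [← one_div, le_div_iff₀ (by positivity)]
    nlinarith
  refine ⟨?_, ?_, ?_⟩
  · rw [hC]; exact infDist_calc t _ ht0 h3
  · rw [vec2_zero, vec2_one]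
    have h : t * (t ^ 3)⁻¹ = (t ^ 2)⁻¹ := by
      field_simp
    rw [h, sub_self, max_self, max_eq_left (by linarith : (0:ℝ) ≤ (t ^ 2)⁻¹ - 1)]
    exact max_eq_right (by linarith)
  · intro L hL
    have key := hL (vec2 (t⁻¹ + 1) 1)
    rw [hC, infDist_calc t _ ht0 (by linarith), vec2_zero, vec2_one] at key
    have hresid : t * (t⁻¹ + 1) - 1 = t := by field_simp; ring
    rw [hresid, sub_self, max_self, max_eq_left ht0.le, max_eq_right ht0.le] at key
    have h1 : t⁻¹ + 1 - t⁻¹ = 1 := by ring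
    rw [h1] at key
    rw [← one_div, div_le_iff₀ ht0]
    linarith [mul_comm L t]
end

section
/- Let H be a real Hilbert space and suppose the uniform Slater condition holds with constant ε > 0 for continuous controls (ū, b̄): for every t ∈ [0,T] there exists x with ⟨ū_i(t), x⟩ ≤ b̄_i(t) − ε for all i. Let 0 < γ < ε, δ := (2ε + γ)/3, and suppose x̂ : [0,T] → H is continuous with ⟨ū_i(t), x̂(t)⟩ ≤ b̄_i(t) − δ for all t, i. Then for every control (u,b) with max_{t,i} ‖u_i(t) − ū_i(t)‖ + max_{t,i} |b_i(t) − b̄_i(t)| ≤ (ε − γ)/(3(1 + ‖x̂‖_∞)), one has ⟨u_i(t), x̂(t)⟩ ≤ b_i(t) − γ for all t ∈ [0,T] and i = 1,…,m. -/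
open Set
open scoped RealInnerProductSpace

lemma bdd_aux_fin {m : ℕ} {T : ℝ} (f : Fin m → ℝ → ℝ)
    (hf : ∀ i, ContinuousOn (f i) (Icc 0 T)) :
    BddAbove {a : ℝ | ∃ t ∈ Icc (0:ℝ) T, ∃ i : Fin m, a = f i t} := by
  have h : ∀ i, BddAbove ((f i) '' Icc 0 T) :=
    fun i => (isCompact_Icc.image_of_continuousOn (hf i)).bddAbove
  choose M hM using h
  obtain ⟨M0, hM0⟩ := (Set.finite_range M).bddAbove
  refine ⟨M0, ?_⟩
  rintro a ⟨t, ht, i, rfl⟩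
  exact le_trans (hM i ⟨t, ht, rfl⟩) (hM0 ⟨i, rfl⟩)

theorem uniform_gamma_slater_point {H : Type*} [NormedAddCommGroup H]
    [InnerProductSpace ℝ H] [CompleteSpace H]
    (T : ℝ) (hT : 0 < T) (m : ℕ)
    (ub u : Fin m → ℝ → H) (bb bfn : Fin m → ℝ → ℝ)
    (hubc : ∀ i, ContinuousOn (ub i) (Icc 0 T))
    (hbbc : ∀ i, ContinuousOn (bb i) (Icc 0 T))
    (huc : ∀ i, ContinuousOn (u i) (Icc 0 T))
    (hbc : ∀ i, ContinuousOn (bfn i) (Icc 0 T))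
    (ε : ℝ) (hε : 0 < ε)
    (hSlater : ∀ t ∈ Icc (0:ℝ) T, ∃ x : H, ∀ i, ⟪ub i t, x⟫ ≤ bb i t - ε)
    (γ δ : ℝ) (hγ : 0 < γ) (hγε : γ < ε) (hδ : δ = (2 * ε + γ) / 3)
    (xhat : ℝ → H) (hxhatc : ContinuousOn xhat (Icc 0 T))
    (hxhat : ∀ t ∈ Icc (0:ℝ) T, ∀ i, ⟪ub i t, xhat t⟫ ≤ bb i t - δ)
    (hball :
      sSup {a : ℝ | ∃ t ∈ Icc (0:ℝ) T, ∃ i : Fin m, a = ‖u i t - ub i t‖} +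
      sSup {a : ℝ | ∃ t ∈ Icc (0:ℝ) T, ∃ i : Fin m, a = |bfn i t - bb i t|} ≤
      (ε - γ) / (3 * (1 + sSup {a : ℝ | ∃ t ∈ Icc (0:ℝ) T, a = ‖xhat t‖}))) :
    ∀ t ∈ Icc (0:ℝ) T, ∀ i, ⟪u i t, xhat t⟫ ≤ bfn i t - γ := by
  set A := sSup {a : ℝ | ∃ t ∈ Icc (0:ℝ) T, ∃ i : Fin m, a = ‖u i t - ub i t‖} with hAdef
  set B := sSup {a : ℝ | ∃ t ∈ Icc (0:ℝ) T, ∃ i : Fin m, a = |bfn i t - bb i t|} with hBdef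
  set C := sSup {a : ℝ | ∃ t ∈ Icc (0:ℝ) T, a = ‖xhat t‖} with hCdef
  have bddA : BddAbove {a : ℝ | ∃ t ∈ Icc (0:ℝ) T, ∃ i : Fin m, a = ‖u i t - ub i t‖} :=
    bdd_aux_fin _ (fun i => ((huc i).sub (hubc i)).norm)
  have bddB : BddAbove {a : ℝ | ∃ t ∈ Icc (0:ℝ) T, ∃ i : Fin m, a = |bfn i t - bb i t|} :=
    bdd_aux_fin _ (fun i => ((hbc i).sub (hbbc i)).abs)
  have bddC : BddAbove {a : ℝ | ∃ t ∈ Icc (0:ℝ) T, a = ‖xhat t‖} := by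
    have : {a : ℝ | ∃ t ∈ Icc (0:ℝ) T, a = ‖xhat t‖} = (fun t => ‖xhat t‖) '' Icc 0 T := by
      ext a; constructor
      · rintro ⟨t, ht, rfl⟩; exact ⟨t, ht, rfl⟩
      · rintro ⟨t, ht, rfl⟩; exact ⟨t, ht, rfl⟩
    rw [this]
    exact (isCompact_Icc.image_of_continuousOn hxhatc.norm).bddAbove
  intro t ht i
  have hA : ‖u i t - ub i t‖ ≤ A := le_csSup bddA ⟨t, ht, i, rfl⟩
  have hB : |bfn i t - bb i t| ≤ B := le_csSup bddB ⟨t, ht, i, rfl⟩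
  have hC : ‖xhat t‖ ≤ C := le_csSup bddC ⟨t, ht, rfl⟩
  have hA0 : 0 ≤ A := le_trans (norm_nonneg _) hA
  have hB0 : 0 ≤ B := le_trans (abs_nonneg _) hB
  have hC0 : 0 ≤ C := le_trans (norm_nonneg _) hC
  have hC1 : (0:ℝ) < 1 + C := by linarith
  have hkey : A + B ≤ (ε - γ) / (3 * (1 + C)) := hball
  have hprod : (A + B) * (3 * (1 + C)) ≤ ε - γ := by
    rw [← le_div_iff₀ (by positivity)]
    exact hkey
  have hsplit : ⟪u i t, xhat t⟫ = ⟪ub i t, xhat t⟫ + ⟪u i t - ub i t, xhat t⟫ := by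
    rw [inner_sub_left]; ring
  have hcs : ⟪u i t - ub i t, xhat t⟫ ≤ ‖u i t - ub i t‖ * ‖xhat t‖ :=
    real_inner_le_norm _ _
  have h1 : ⟪ub i t, xhat t⟫ ≤ bb i t - δ := hxhat t ht i
  have h2 : bb i t ≤ bfn i t + |bfn i t - bb i t| := by
    have := abs_nonneg (bfn i t - bb i t)
    have := le_abs_self (bfn i t - bb i t)
    have := neg_abs_le (bfn i t - bb i t)
    linarith
  have hcs2 : ‖u i t - ub i t‖ * ‖xhat t‖ ≤ A * C :=
    mul_le_mul hA hC (norm_nonneg _) hA0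
  -- B + A*C ≤ (A+B)*(1+C) ≤ (ε-γ)/3
  have hfin : B + A * C ≤ δ - γ := by
    have h3 : B + A * C ≤ (A + B) * (1 + C) := by nlinarith
    nlinarith
  linarith [hsplit ▸ add_le_add (le_trans h1 (by linarith : bb i t - δ ≤ bfn i t + |bfn i t - bb i t| - δ)) (le_trans hcs hcs2)]
end

section
/- Let H be a Hilbert space, (u,b) controls with polyhedron C(t) := {x : ⟨u_i(t),x⟩ ≤ b_i(t) ∀i}, and suppose x : [0,T] → H is differentiable at t ∈ (0,T) with x(s) ∈ C(s) for all s near t, and each u_i, b_i differentiable at t. If x̂ ∈ H satisfies ⟨u_i(t), x̂⟩ ≤ b_i(t) − δ with δ > 0 for all i, and −ẋ(t) ∈ N_{C(t)}(x(t)), then ‖ẋ(t)‖ ≤ δ^{-1} ‖x(t) − x̂‖ · Σᵢ (‖u̇_i(t)‖·‖x(t)‖ + |ḃ_i(t)|). -/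
open Set
open scoped RealInnerProductSpace

def normalCone {H : Type*} [NormedAddCommGroup H] [InnerProductSpace ℝ H]
    (C : Set H) (x : H) : Set H :=
  {v | ∀ y ∈ C, ⟪v, y - x⟫ ≤ 0}

theorem sweeping_velocity_estimate {H : Type*} [NormedAddCommGroup H]
    [InnerProductSpace ℝ H] [CompleteSpace H]
    (m : ℕ) (T t : ℝ) (ht : t ∈ Ioo (0:ℝ) T)
    (u : Fin m → ℝ → H) (b : Fin m → ℝ → ℝ) (x : ℝ → H)
    (ud : Fin m → H) (bd : Fin m → ℝ) (xd : H)
    (hud : ∀ i, HasDerivAt (u i) (ud i) t)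
    (hbd : ∀ i, HasDerivAt (b i) (bd i) t)
    (hxd : HasDerivAt x xd t)
    (C : ℝ → Set H) (hC : ∀ s, C s = {y : H | ∀ i, ⟪u i s, y⟫ ≤ b i s})
    (hmem : ∀ᶠ s in nhds t, x s ∈ C s)
    (δ : ℝ) (hδ : 0 < δ) (xhat : H) (hxhat : ∀ i, ⟪u i t, xhat⟫ ≤ b i t - δ)
    (hN : -xd ∈ normalCone (C t) (x t)) :
    ‖xd‖ ≤ δ⁻¹ * ‖x t - xhat‖ * ∑ i, (‖ud i‖ * ‖x t‖ + |bd i|) := by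
  -- the "violation" functions
  set g : Fin m → ℝ → ℝ :=
    fun i s => ⟪u i t - u i (t - s), x (t - s)⟫ + (b i (t - s) - b i t) with hgdef
  have hts : HasDerivAt (fun s : ℝ => t - s) (-1 : ℝ) 0 := by
    simpa using (hasDerivAt_id (0:ℝ)).const_sub t
  have hxc : HasDerivAt (fun s => x (t - s)) (-xd) 0 := by
    have := HasDerivAt.scomp (x := (0:ℝ)) (by simpa using hxd) hts
    simpa [Function.comp_def] using this
  have huc : ∀ i, HasDerivAt (fun s => u i t - u i (t - s)) (ud i) 0 := by
    intro i
    have h1 : HasDerivAt (fun s => u i (t - s)) (-(ud i)) 0 := by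
      have := HasDerivAt.scomp (x := (0:ℝ)) (by simpa using hud i) hts
      simpa [Function.comp_def] using this
    simpa using h1.const_sub (u i t)
  have hbc : ∀ i, HasDerivAt (fun s => b i (t - s) - b i t) (-(bd i)) 0 := by
    intro i
    have h1 : HasDerivAt (fun s => b i (t - s)) (-(bd i)) 0 := by
      have := HasDerivAt.comp (x := (0:ℝ)) (by simpa using hbd i) hts
      simpa [Function.comp_def] using this
    simpa using h1.sub_const (b i t)
  have hg0 : ∀ i, g i 0 = 0 := by intro i; simp [hgdef]
  have hgd : ∀ i, HasDerivAt (g i) (⟪ud i, x t⟫ - bd i) 0 := by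
    intro i
    have hin := HasDerivAt.inner ℝ (huc i) hxc
    have := hin.add (hbc i)
    simpa [hgdef, sub_eq_add_neg, Pi.add_def] using this
  -- slope limits from the right
  have hx_slope : Filter.Tendsto (fun s : ℝ => s⁻¹ • (x (t - s) - x t))
      (nhdsWithin 0 (Ioi 0)) (nhds (-xd)) := by
    have := hxc.tendsto_slope_zero_right
    simpa using this
  have hg_slope : ∀ i, Filter.Tendsto (fun s : ℝ => s⁻¹ * g i s)
      (nhdsWithin 0 (Ioi 0)) (nhds (⟪ud i, x t⟫ - bd i)) := by
    intro i
    have := (hgd i).tendsto_slope_zero_right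
    simpa [hg0 i, smul_eq_mul] using this
  set L : ℝ := ∑ i, max (⟪ud i, x t⟫ - bd i) 0 with hLdef
  set ε : ℝ → ℝ := fun s => ∑ i, max (g i s) 0 with hεdef
  have hε_nonneg : ∀ s, 0 ≤ ε s := by
    intro s; exact Finset.sum_nonneg fun i _ => le_max_right _ _
  have hε_slope : Filter.Tendsto (fun s : ℝ => s⁻¹ * ε s)
      (nhdsWithin 0 (Ioi 0)) (nhds L) := by
    have h1 : Filter.Tendsto (fun s : ℝ => ∑ i, max (s⁻¹ * g i s) 0)
        (nhdsWithin 0 (Ioi 0)) (nhds L) := by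
      exact tendsto_finset_sum _ fun i _ => (hg_slope i).max tendsto_const_nhds
    refine h1.congr' ?_
    filter_upwards [self_mem_nhdsWithin] with s hs
    have hs' : (0:ℝ) < s := hs
    rw [hεdef]
    simp only [Finset.mul_sum]
    refine Finset.sum_congr rfl fun i _ => ?_
    rw [mul_max_of_nonneg _ _ (inv_nonneg.2 hs'.le), mul_zero]
  -- eventually ε s < δ
  have hε_cont : Filter.Tendsto ε (nhds 0) (nhds 0) := by
    have h1 : Filter.Tendsto (fun s => ∑ i, max (g i s) 0) (nhds 0) (nhds (∑ i : Fin m, max (g i 0) 0)) :=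
      tendsto_finset_sum _ fun i _ => ((hgd i).continuousAt.tendsto).max tendsto_const_nhds
    simpa [hg0] using h1
  have hε_small : ∀ᶠ s in nhdsWithin 0 (Ioi 0), ε s ≤ δ := by
    apply Filter.Eventually.filter_mono nhdsWithin_le_nhds
    exact hε_cont.eventually_le_const hδ
  -- eventually x (t - s) ∈ C (t - s)
  have hmem' : ∀ᶠ s in nhdsWithin 0 (Ioi 0), x (t - s) ∈ C (t - s) := by
    apply Filter.Eventually.filter_mono nhdsWithin_le_nhds
    have hcont : Filter.Tendsto (fun s : ℝ => t - s) (nhds 0) (nhds t) := by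
      simpa using hts.continuousAt.tendsto
    exact hcont.eventually hmem
  -- the key eventual inequality
  have hkey : ∀ᶠ s in nhdsWithin 0 (Ioi 0),
      0 ≤ ⟪xd, s⁻¹ • (x (t - s) - x t)⟫ + (s⁻¹ * ε s) * δ⁻¹ * ⟪xd, xhat - x (t - s)⟫ := by
    filter_upwards [hε_small, hmem', self_mem_nhdsWithin] with s hεs hxs hs
    have hs' : (0:ℝ) < s := hs
    set lam : ℝ := ε s / δ with hlam
    have hlam0 : 0 ≤ lam := div_nonneg (hε_nonneg s) hδ.le
    have hlam1 : lam ≤ 1 := (div_le_one hδ).2 hεs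
    set y : H := x (t - s) + lam • (xhat - x (t - s)) with hy
    have hyC : y ∈ C t := by
      rw [hC]
      intro i
      have hxsC : ⟪u i (t - s), x (t - s)⟫ ≤ b i (t - s) := by
        have := hxs; rw [hC] at this; exact this i
      have hbound : ⟪u i t, x (t - s)⟫ ≤ b i t + g i s := by
        have : ⟪u i t, x (t - s)⟫ = ⟪u i (t - s), x (t - s)⟫ + ⟪u i t - u i (t - s), x (t - s)⟫ := by
          rw [← inner_add_left]; congr 1; abel
        rw [this, hgdef]
        simp only
        linarith
      have hgmax : g i s ≤ ε s := by
        calc g i s ≤ max (g i s) 0 := le_max_left _ _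
          _ ≤ ε s := Finset.single_le_sum (f := fun j => max (g j s) 0)
              (fun j _ => le_max_right _ _) (Finset.mem_univ i)
      have hginner : ⟪u i t, y⟫ =
          (1 - lam) * ⟪u i t, x (t - s)⟫ + lam * ⟪u i t, xhat⟫ := by
        rw [hy, inner_add_right, real_inner_smul_right, inner_sub_right]
        ring
      rw [hginner]
      have h1 : (1 - lam) * ⟪u i t, x (t - s)⟫ ≤ (1 - lam) * (b i t + g i s) :=
        mul_le_mul_of_nonneg_left hbound (by linarith)
      have h2 : lam * ⟪u i t, xhat⟫ ≤ lam * (b i t - δ) :=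
        mul_le_mul_of_nonneg_left (hxhat i) hlam0
      have hld : lam * δ = ε s := by
        rw [hlam]; field_simp
      nlinarith [hgmax, hlam0, hlam1, hε_nonneg s]
    have hNy := hN y hyC
    have h0 : 0 ≤ ⟪xd, y - x t⟫ := by
      have : ⟪-xd, y - x t⟫ = -⟪xd, y - x t⟫ := by rw [inner_neg_left]
      linarith [hNy, this ▸ hNy]
    have hexp : ⟪xd, y - x t⟫ =
        ⟪xd, x (t - s) - x t⟫ + lam * ⟪xd, xhat - x (t - s)⟫ := by
      rw [hy]
      have : x (t - s) + lam • (xhat - x (t - s)) - x t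
          = (x (t - s) - x t) + lam • (xhat - x (t - s)) := by abel
      rw [this, inner_add_right, real_inner_smul_right]
    rw [hexp] at h0
    have hmul : 0 ≤ s⁻¹ * (⟪xd, x (t - s) - x t⟫ + lam * ⟪xd, xhat - x (t - s)⟫) :=
      mul_nonneg (inv_nonneg.2 hs'.le) h0
    have hrw : s⁻¹ * (⟪xd, x (t - s) - x t⟫ + lam * ⟪xd, xhat - x (t - s)⟫)
        = ⟪xd, s⁻¹ • (x (t - s) - x t)⟫ + (s⁻¹ * ε s) * δ⁻¹ * ⟪xd, xhat - x (t - s)⟫ := by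
      rw [real_inner_smul_right, hlam]
      field_simp
    linarith [hrw ▸ hmul]
  -- pass to the limit
  have hxcont : Filter.Tendsto (fun s : ℝ => x (t - s)) (nhdsWithin 0 (Ioi 0)) (nhds (x t)) := by
    have := hxc.continuousAt.tendsto
    simpa using this.mono_left nhdsWithin_le_nhds
  have hlim : Filter.Tendsto
      (fun s : ℝ => ⟪xd, s⁻¹ • (x (t - s) - x t)⟫ + (s⁻¹ * ε s) * δ⁻¹ * ⟪xd, xhat - x (t - s)⟫)
      (nhdsWithin 0 (Ioi 0))
      (nhds (⟪xd, -xd⟫ + L * δ⁻¹ * ⟪xd, xhat - x t⟫)) := by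
    have h1 : Filter.Tendsto (fun s : ℝ => ⟪xd, s⁻¹ • (x (t - s) - x t)⟫)
        (nhdsWithin 0 (Ioi 0)) (nhds ⟪xd, -xd⟫) :=
      tendsto_const_nhds.inner hx_slope
    have h2 : Filter.Tendsto (fun s : ℝ => ⟪xd, xhat - x (t - s)⟫)
        (nhdsWithin 0 (Ioi 0)) (nhds ⟪xd, xhat - x t⟫) :=
      tendsto_const_nhds.inner (hxcont.const_sub xhat)
    exact h1.add ((hε_slope.mul_const δ⁻¹).mul h2)
  have hfinal : 0 ≤ ⟪xd, -xd⟫ + L * δ⁻¹ * ⟪xd, xhat - x t⟫ :=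
    ge_of_tendsto hlim hkey
  have hL0 : 0 ≤ L := Finset.sum_nonneg fun i _ => le_max_right _ _
  have hsq : ‖xd‖ ^ 2 ≤ L * δ⁻¹ * ⟪xd, xhat - x t⟫ := by
    have : ⟪xd, -xd⟫ = -(‖xd‖ ^ 2) := by
      rw [inner_neg_right, real_inner_self_eq_norm_sq]
    linarith [hfinal, this ▸ hfinal]
  have hcs : ⟪xd, xhat - x t⟫ ≤ ‖xd‖ * ‖x t - xhat‖ := by
    calc ⟪xd, xhat - x t⟫ ≤ ‖xd‖ * ‖xhat - x t‖ := real_inner_le_norm _ _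
      _ = ‖xd‖ * ‖x t - xhat‖ := by rw [norm_sub_rev]
  have hLsum : L ≤ ∑ i, (‖ud i‖ * ‖x t‖ + |bd i|) := by
    apply Finset.sum_le_sum
    intro i _
    have h1 : |⟪ud i, x t⟫| ≤ ‖ud i‖ * ‖x t‖ := abs_real_inner_le_norm _ _
    have : max (⟪ud i, x t⟫ - bd i) 0 ≤ |⟪ud i, x t⟫ - bd i| := max_le (le_abs_self _) (abs_nonneg _)
    calc max (⟪ud i, x t⟫ - bd i) 0 ≤ |⟪ud i, x t⟫ - bd i| := this
      _ ≤ |⟪ud i, x t⟫| + |bd i| := abs_sub _ _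
      _ ≤ ‖ud i‖ * ‖x t‖ + |bd i| := by linarith
  rcases eq_or_ne xd 0 with h0 | h0
  · rw [h0, norm_zero]
    have hsum0 : 0 ≤ ∑ i, (‖ud i‖ * ‖x t‖ + |bd i|) :=
      Finset.sum_nonneg fun i _ => by positivity
    positivity
  · have hxdpos : 0 < ‖xd‖ := norm_pos_iff.2 h0
    have h1 : ‖xd‖ ^ 2 ≤ L * δ⁻¹ * (‖xd‖ * ‖x t - xhat‖) := by
      refine hsq.trans (mul_le_mul_of_nonneg_left ?_ (by positivity))
      -- ⟪xd, xhat - x t⟫ ≤ ‖xd‖ * ‖x t - xhat‖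
      exact hcs
    have h2 : ‖xd‖ ≤ L * δ⁻¹ * ‖x t - xhat‖ := by
      have := h1
      rw [sq] at this
      nlinarith [hxdpos]
    calc ‖xd‖ ≤ L * δ⁻¹ * ‖x t - xhat‖ := h2
      _ = δ⁻¹ * ‖x t - xhat‖ * L := by ring
      _ ≤ δ⁻¹ * ‖x t - xhat‖ * ∑ i, (‖ud i‖ * ‖x t‖ + |bd i|) := by
          apply mul_le_mul_of_nonneg_left hLsum (by positivity)
end
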